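/- Let P be a finite set of points in the Euclidean plane ℝ², let T be a minimum spanning tree of P whose edge lengths are pairwise distinct, let s ∈ ℝ² \ P, and let a, b, c, d be four distinct points of P. For each of the six pairs {x, y} ⊆ {a, b, c, d}, let e_{xy} be the unique edge of maximum length on the unique path in T from x to y. Then the graph on vertex set P ∪ {s} whose edge set is (E(T) \ {e_{xy} : {x,y} ⊆ {a,b,c,d}, x ≠ y}) together with the four edges {s,a}, {s,b}, {s,c}, {s,d} is a spanning tree of P ∪ {s}. -/

import Mathlib

open scoped BigOperators

noncomputable section

/-- The Euclidean plane. -/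
abbrev Pt : Type := EuclideanSpace ℝ (Fin 2)

/-- The length of an edge (an unordered pair of points): the Euclidean
distance between its endpoints. -/
def edgeLen : Sym2 Pt → ℝ :=
  Sym2.lift ⟨fun a b => dist a b, fun a b => dist_comm a b⟩

/-- The total length of a graph on the plane: the sum of the Euclidean
lengths of its edges. -/
def glength (G : SimpleGraph Pt) : ℝ := ∑ᶠ e ∈ G.edgeSet, edgeLen e

/-- `G` is a spanning tree of the point set `V`: all its edges join points of
`V`, it is acyclic, and all points of `V` are pairwise connected in `G`. -/
def IsSpanningTreeOn (V : Set Pt) (G : SimpleGraph Pt) : Prop :=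
  (∀ ⦃x y : Pt⦄, G.Adj x y → x ∈ V ∧ y ∈ V) ∧ G.IsAcyclic ∧
    ∀ x ∈ V, ∀ y ∈ V, G.Reachable x y

/-- `G` is a minimum spanning tree of the point set `V`. -/
def IsMSTOn (V : Set Pt) (G : SimpleGraph Pt) : Prop :=
  IsSpanningTreeOn V G ∧
    ∀ H : SimpleGraph Pt, IsSpanningTreeOn V H → glength G ≤ glength H

/-- The edges of `T` have pairwise distinct lengths. -/
def DistinctEdgeLengths (T : SimpleGraph Pt) : Prop :=
  ∀ e ∈ T.edgeSet, ∀ f ∈ T.edgeSet, edgeLen e = edgeLen f → e = f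

/-- `e` is the (unique) edge of maximum length on the (unique) path in `T`
from `x` to `y`: it is an edge of `T` lying on every path from `x` to `y`,
and on every such path its length is maximal. -/
def BottleneckEdge (T : SimpleGraph Pt) (x y : Pt) (e : Sym2 Pt) : Prop :=
  e ∈ T.edgeSet ∧
    ∀ p : T.Walk x y, p.IsPath → e ∈ p.edges ∧ ∀ f ∈ p.edges, edgeLen f ≤ edgeLen e

/-- Auxiliary: split a walk at an edge it contains. -/
lemma stmt7_walk_split {V : Type*} {H : SimpleGraph V} {A B : V} (w : H.Walk A B) {e : Sym2 V}
    (he : e ∈ w.edges) :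
    ∃ (u v : V) (h : H.Adj u v) (w1 : H.Walk A u) (w2 : H.Walk v B),
      w = w1.append (SimpleGraph.Walk.cons h w2) ∧ e = s(u, v) := by
  induction w with
  | nil => simp at he
  | cons h p ih =>
    rw [SimpleGraph.Walk.edges_cons, List.mem_cons] at he
    rcases he with he | he
    · exact ⟨_, _, h, .nil, p, rfl, he⟩
    · obtain ⟨u, v, hadj, w1, w2, hw, he'⟩ := ih he
      exact ⟨u, v, hadj, .cons h w1, w2, by rw [SimpleGraph.Walk.cons_append, hw], he'⟩

/-- Auxiliary: split a trail at an edge; the two parts avoid that edge. -/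
lemma stmt7_trail_split {V : Type*} {H : SimpleGraph V} {A B : V} {w : H.Walk A B}
    (hw : w.IsTrail) {e : Sym2 V} (he : e ∈ w.edges) :
    ∃ (u v : V) (_h : H.Adj u v) (w1 : H.Walk A u) (w2 : H.Walk v B),
      e = s(u, v) ∧ e ∉ w1.edges ∧ e ∉ w2.edges ∧
      (∀ g ∈ w1.edges, g ∈ w.edges) ∧ (∀ g ∈ w2.edges, g ∈ w.edges) := by
  obtain ⟨u, v, h, w1, w2, rfl, he'⟩ := stmt7_walk_split w he
  have hed : (w1.append (SimpleGraph.Walk.cons h w2)).edges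
      = w1.edges ++ (s(u,v) :: w2.edges) := by
    rw [SimpleGraph.Walk.edges_append, SimpleGraph.Walk.edges_cons]
  have hnd := hw.edges_nodup
  rw [hed] at hnd
  have h1 : s(u,v) ∉ w1.edges := by
    intro hmem
    have := (List.disjoint_of_nodup_append hnd) hmem
    simp at this
  have h2 : s(u,v) ∉ w2.edges := by
    have := (List.nodup_append.mp hnd).2.1
    simpa using (List.nodup_cons.mp this).1
  subst he'
  exact ⟨u, v, h, w1, w2, rfl, h1, h2,
    fun g hg => by rw [hed]; exact List.mem_append_left _ hg,
    fun g hg => by rw [hed]; exact List.mem_append_right _ (List.mem_cons_of_mem _ hg)⟩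

open Classical in
lemma stmt7_reach_aux (T : SimpleGraph Pt) (hdist : DistinctEdgeLengths T)
    (Fs : Finset (Sym2 Pt)) (S : Set Pt)
    (hF : ∀ g ∈ Fs, ∃ y z : Pt, y ∈ S ∧ z ∈ S ∧ Nonempty (T.Walk y z) ∧ BottleneckEdge T y z g) :
    ∀ n : ℕ, ∀ (p x : Pt), x ∈ S → ∀ (r : T.Walk p x),
      (Fs.filter (fun g => ∃ g' ∈ r.edges, g' ∈ Fs ∧ edgeLen g ≤ edgeLen g')).card ≤ n →
      ∃ y ∈ S, ∃ w : T.Walk p y, ∀ g ∈ w.edges, g ∉ Fs := by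
  classical
  intro n
  induction n with
  | zero =>
    intro p x hx r hcard
    refine ⟨x, hx, r.bypass, fun g hg hgF => ?_⟩
    have hg' : g ∈ r.edges := r.edges_bypass_subset hg
    have : g ∈ Fs.filter (fun g => ∃ g' ∈ r.edges, g' ∈ Fs ∧ edgeLen g ≤ edgeLen g') :=
      Finset.mem_filter.mpr ⟨hgF, g, hg', hgF, le_refl _⟩
    have := Finset.card_pos.mpr ⟨g, this⟩
    omega
  | succ n ih =>
    intro p x hx r hcard
    set q := r.bypass with hqdef
    have hq : q.IsPath := r.bypass_isPath
    by_cases h0 : ∀ g ∈ q.edges, g ∉ Fs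
    · exact ⟨x, hx, q, h0⟩
    · push_neg at h0
      obtain ⟨g0, hg0e, hg0F⟩ := h0
      have hFqne : (Fs.filter (fun g => g ∈ q.edges)).Nonempty :=
        ⟨g0, Finset.mem_filter.mpr ⟨hg0F, hg0e⟩⟩
      obtain ⟨f, hfFq, hfmax⟩ := Finset.exists_max_image _ edgeLen hFqne
      have hfF : f ∈ Fs := (Finset.mem_filter.mp hfFq).1
      have hfq : f ∈ q.edges := (Finset.mem_filter.mp hfFq).2
      have hfT : f ∈ T.edgeSet := q.edges_subset_edgeSet hfq
      obtain ⟨y, z, hy, hz, ⟨w0⟩, hbn⟩ := hF f hfF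
      set t := w0.bypass with htdef
      have ht : t.IsPath := w0.bypass_isPath
      obtain ⟨hft, htmax⟩ := hbn.2 t ht
      obtain ⟨u, v, hadj, q1, q2, hfs, hfq1, hfq2, hq1sub, hq2sub⟩ :=
        stmt7_trail_split hq.isTrail hfq
      obtain ⟨u', v', hadj', t1, t2, hfs', hft1, hft2, ht1sub, ht2sub⟩ :=
        stmt7_trail_split ht.isTrail hft
      have hstrict : ∀ g ∈ Fs, g ∈ q1.edges ∨ g ∈ t1.edges ∨ g ∈ t2.edges →
          edgeLen g < edgeLen f := by
        intro g hgF hgcase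
        have hgT : g ∈ T.edgeSet := by
          rcases hgcase with h | h | h
          · exact q.edges_subset_edgeSet (hq1sub g h)
          · exact t.edges_subset_edgeSet (ht1sub g h)
          · exact t.edges_subset_edgeSet (ht2sub g h)
        have hle : edgeLen g ≤ edgeLen f := by
          rcases hgcase with h | h | h
          · exact hfmax g (Finset.mem_filter.mpr ⟨hgF, hq1sub g h⟩)
          · exact htmax g (ht1sub g h)
          · exact htmax g (ht2sub g h)
        rcases lt_or_eq_of_le hle with h' | h'
        · exact h'
        · exfalso
          have : g = f := hdist g hgT f hfT h'
          subst this
          rcases hgcase with h | h | h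
          · exact hfq1 h
          · exact hft1 h
          · exact hft2 h
      have hmain : ∃ y' ∈ S, ∃ w' : T.Walk p y',
          (∀ g ∈ w'.edges, g ∈ q1.edges ∨ g ∈ t1.edges ∨ g ∈ t2.edges) := by
        have hsym : (u' = u ∧ v' = v) ∨ (u' = v ∧ v' = u) := by
          rw [hfs] at hfs'
          exact Sym2.eq_iff.mp hfs'.symm
        rcases hsym with ⟨h1, h2⟩ | ⟨h1, h2⟩
        · subst h1
          refine ⟨y, hy, q1.append t1.reverse, ?_⟩
          intro g hg
          rw [SimpleGraph.Walk.edges_append, List.mem_append] at hg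
          rcases hg with h | h
          · exact Or.inl h
          · rw [SimpleGraph.Walk.edges_reverse, List.mem_reverse] at h
            exact Or.inr (Or.inl h)
        · subst h2
          refine ⟨z, hz, q1.append t2, ?_⟩
          intro g hg
          rw [SimpleGraph.Walk.edges_append, List.mem_append] at hg
          rcases hg with h | h
          · exact Or.inl h
          · exact Or.inr (Or.inr h)
      obtain ⟨y', hy', w', hw'⟩ := hmain
      have hsub : Fs.filter (fun g => ∃ g' ∈ w'.edges, g' ∈ Fs ∧ edgeLen g ≤ edgeLen g') ⊂
          Fs.filter (fun g => ∃ g' ∈ r.edges, g' ∈ Fs ∧ edgeLen g ≤ edgeLen g') := by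
        constructor
        · intro g hg
          obtain ⟨hgF, g', hg'w, hg'F, hle⟩ := Finset.mem_filter.mp hg
          have : edgeLen g' < edgeLen f := hstrict g' hg'F (hw' g' hg'w)
          exact Finset.mem_filter.mpr ⟨hgF, f, r.edges_bypass_subset hfq, hfF,
            le_of_lt (lt_of_le_of_lt hle this)⟩
        · intro hsup
          have hfmem : f ∈ Fs.filter
              (fun g => ∃ g' ∈ r.edges, g' ∈ Fs ∧ edgeLen g ≤ edgeLen g') :=
            Finset.mem_filter.mpr ⟨hfF, f, r.edges_bypass_subset hfq, hfF, le_refl _⟩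
          obtain ⟨-, g', hg'w, hg'F, hle⟩ := Finset.mem_filter.mp (hsup hfmem)
          exact absurd hle (not_le.mpr (hstrict g' hg'F (hw' g' hg'w)))
      have hlt := Finset.card_lt_card hsub
      exact ih p y' hy' w' (by omega)

open Classical in
lemma stmt7_bott_mem {T : SimpleGraph Pt} {x y : Pt} {e : Sym2 Pt}
    (h : BottleneckEdge T x y e) :
    (∀ r : T.Walk x y, e ∈ r.edges) ∧ (∀ r : T.Walk y x, e ∈ r.edges) := by
  have h1 : ∀ r : T.Walk x y, e ∈ r.edges := fun r =>
    r.edges_bypass_subset (h.2 r.bypass r.bypass_isPath).1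
  refine ⟨h1, fun r => ?_⟩
  have := h1 r.reverse
  rwa [SimpleGraph.Walk.edges_reverse, List.mem_reverse] at this

theorem stmt7 (P : Finset Pt) (T : SimpleGraph Pt) (hT : IsMSTOn ↑P T)
    (hdist : DistinctEdgeLengths T)
    (s : Pt) (hs : s ∉ P)
    (a b c d : Pt) (ha : a ∈ P) (hb : b ∈ P) (hc : c ∈ P) (hd : d ∈ P)
    (hab : a ≠ b) (hac : a ≠ c) (had : a ≠ d)
    (hbc : b ≠ c) (hbd : b ≠ d) (hcd : c ≠ d)
    (eab eac ead ebc ebd ecd : Sym2 Pt)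
    (heab : BottleneckEdge T a b eab) (heac : BottleneckEdge T a c eac)
    (head : BottleneckEdge T a d ead) (hebc : BottleneckEdge T b c ebc)
    (hebd : BottleneckEdge T b d ebd) (hecd : BottleneckEdge T c d ecd) :
    IsSpanningTreeOn (insert s ↑P)
      (SimpleGraph.fromEdgeSet
        ((T.edgeSet \ {eab, eac, ead, ebc, ebd, ecd}) ∪
          {s(s, a), s(s, b), s(s, c), s(s, d)})) := by
  classical
  letI : DecidableEq Pt := Classical.decEq _
  letI : DecidableEq (Sym2 Pt) := Classical.decEq _
  obtain ⟨⟨hTedge, hTac, hTreach⟩, -⟩ := hT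
  set F : Set (Sym2 Pt) := {eab, eac, ead, ebc, ebd, ecd} with hFdef
  set Fs : Finset (Sym2 Pt) := {eab, eac, ead, ebc, ebd, ecd} with hFsdef
  have hFsF : ∀ g, g ∈ Fs ↔ g ∈ F := by intro g; simp [hFdef, hFsdef]
  set Sset : Set Pt := {a, b, c, d} with hSdef
  set Es : Set (Sym2 Pt) :=
    (T.edgeSet \ F) ∪ {s(s, a), s(s, b), s(s, c), s(s, d)} with hEsdef
  set G : SimpleGraph Pt := SimpleGraph.fromEdgeSet Es with hGdef
  have hsa : s ≠ a := fun h => hs (h ▸ ha)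
  have hsb : s ≠ b := fun h => hs (h ▸ hb)
  have hsc : s ≠ c := fun h => hs (h ▸ hc)
  have hsd : s ≠ d := fun h => hs (h ▸ hd)
  have hSP : Sset ⊆ (P : Set Pt) := by
    intro x hx
    rcases hx with rfl | rfl | rfl | rfl <;> assumption
  -- adjacency with s is only via the star edges
  have hGadjS : ∀ w : Pt, G.Adj s w → w ∈ Sset := by
    intro w hw
    rw [hGdef, SimpleGraph.fromEdgeSet_adj] at hw
    obtain ⟨hm, hne⟩ := hw
    rcases hm with hm | hm
    · exfalso
      exact hs (hTedge (T.mem_edgeSet.mp hm.1)).1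
    · simp only [Set.mem_insert_iff, Set.mem_singleton_iff] at hm
      rcases hm with hm | hm | hm | hm <;>
      · rw [Sym2.eq_iff] at hm
        rcases hm with ⟨-, rfl⟩ | ⟨h1, rfl⟩
        · simp [hSdef]
        · exact absurd rfl hne
  -- the star edges are adjacencies of G
  have hGstar : ∀ w ∈ Sset, G.Adj s w := by
    intro w hw
    rw [hGdef, SimpleGraph.fromEdgeSet_adj]
    constructor
    · refine Or.inr ?_
      rcases hw with rfl | rfl | rfl | rfl <;> simp
    · rcases hw with rfl | rfl | rfl | rfl <;> assumption
  -- data for the rerouting lemma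
  have haP : a ∈ (↑P : Set Pt) := by exact_mod_cast ha
  have hbP : b ∈ (↑P : Set Pt) := by exact_mod_cast hb
  have hcP : c ∈ (↑P : Set Pt) := by exact_mod_cast hc
  have hdP : d ∈ (↑P : Set Pt) := by exact_mod_cast hd
  have hFdata : ∀ g ∈ Fs, ∃ y z : Pt, y ∈ Sset ∧ z ∈ Sset ∧
      Nonempty (T.Walk y z) ∧ BottleneckEdge T y z g := by
    intro g hg
    simp only [hFsdef, Finset.mem_insert, Finset.mem_singleton] at hg
    rcases hg with rfl | rfl | rfl | rfl | rfl | rfl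
    · exact ⟨a, b, by simp [hSdef], by simp [hSdef], hTreach a haP b hbP, heab⟩
    · exact ⟨a, c, by simp [hSdef], by simp [hSdef], hTreach a haP c hcP, heac⟩
    · exact ⟨a, d, by simp [hSdef], by simp [hSdef], hTreach a haP d hdP, head⟩
    · exact ⟨b, c, by simp [hSdef], by simp [hSdef], hTreach b hbP c hcP, hebc⟩
    · exact ⟨b, d, by simp [hSdef], by simp [hSdef], hTreach b hbP d hdP, hebd⟩
    · exact ⟨c, d, by simp [hSdef], by simp [hSdef], hTreach c hcP d hdP, hecd⟩
  -- bottleneck edges of pairs in S lie on every walk between them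
  have hpair : ∀ x y : Pt, x ∈ Sset → y ∈ Sset → x ≠ y →
      ∃ e, e ∈ Fs ∧ ∀ r : T.Walk x y, e ∈ r.edges := by
    intro x y hx hy hxy
    rcases hx with rfl | rfl | rfl | rfl <;> rcases hy with rfl | rfl | rfl | rfl <;>
      first
        | exact absurd rfl hxy
        | exact ⟨eab, by simp [hFsdef], (stmt7_bott_mem heab).1⟩
        | exact ⟨eab, by simp [hFsdef], (stmt7_bott_mem heab).2⟩
        | exact ⟨eac, by simp [hFsdef], (stmt7_bott_mem heac).1⟩
        | exact ⟨eac, by simp [hFsdef], (stmt7_bott_mem heac).2⟩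
        | exact ⟨ead, by simp [hFsdef], (stmt7_bott_mem head).1⟩
        | exact ⟨ead, by simp [hFsdef], (stmt7_bott_mem head).2⟩
        | exact ⟨ebc, by simp [hFsdef], (stmt7_bott_mem hebc).1⟩
        | exact ⟨ebc, by simp [hFsdef], (stmt7_bott_mem hebc).2⟩
        | exact ⟨ebd, by simp [hFsdef], (stmt7_bott_mem hebd).1⟩
        | exact ⟨ebd, by simp [hFsdef], (stmt7_bott_mem hebd).2⟩
        | exact ⟨ecd, by simp [hFsdef], (stmt7_bott_mem hecd).1⟩
        | exact ⟨ecd, by simp [hFsdef], (stmt7_bott_mem hecd).2⟩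
  -- every point of P reaches s in G
  have hreach : ∀ p ∈ (↑P : Set Pt), G.Reachable p s := by
    intro p hp
    obtain ⟨r0⟩ := hTreach p hp a haP
    obtain ⟨y, hyS, w, hw⟩ :=
      stmt7_reach_aux T hdist Fs Sset hFdata _ p a (by simp [hSdef]) r0 le_rfl
    have hWG : ∀ e ∈ w.edges, e ∈ G.edgeSet := by
      intro e he
      rw [hGdef, SimpleGraph.edgeSet_fromEdgeSet]
      have heT : e ∈ T.edgeSet := w.edges_subset_edgeSet he
      refine ⟨Or.inl ⟨heT, fun hF' => hw e he ((hFsF e).mpr hF')⟩, ?_⟩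
      exact T.not_isDiag_of_mem_edgeSet heT
    have h1 : G.Reachable p y := ⟨w.transfer G hWG⟩
    exact h1.trans ((hGstar y hyS).symm.reachable)
  refine ⟨?_, ?_, ?_⟩
  · -- edges lie inside insert s P
    intro x y hxy
    rw [hGdef, SimpleGraph.fromEdgeSet_adj] at hxy
    obtain ⟨hm, hne⟩ := hxy
    rcases hm with hm | hm
    · have := hTedge (T.mem_edgeSet.mp hm.1)
      exact ⟨Set.mem_insert_of_mem _ this.1, Set.mem_insert_of_mem _ this.2⟩
    · have key : ∀ w : Pt, w ∈ Sset → s(x, y) = s(s, w) →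
          x ∈ insert s (↑P : Set Pt) ∧ y ∈ insert s (↑P : Set Pt) := by
        intro w hw heq
        rw [Sym2.eq_iff] at heq
        rcases heq with ⟨rfl, rfl⟩ | ⟨rfl, rfl⟩
        · exact ⟨Set.mem_insert _ _, Set.mem_insert_of_mem _ (hSP hw)⟩
        · exact ⟨Set.mem_insert_of_mem _ (hSP hw), Set.mem_insert _ _⟩
      simp only [Set.mem_insert_iff, Set.mem_singleton_iff] at hm
      rcases hm with h | h | h | h
      · exact key a (by simp [hSdef]) h
      · exact key b (by simp [hSdef]) h
      · exact key c (by simp [hSdef]) h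
      · exact key d (by simp [hSdef]) h
  · -- acyclicity
    intro v c0 hc
    by_cases hsup : s ∈ c0.support
    · obtain ⟨c2, hc2⟩ : ∃ c2 : G.Walk s s, c2.IsCycle := ⟨c0.rotate s hsup, hc.rotate hsup⟩
      cases c2 with
      | nil => exact hc2.ne_nil rfl
      | @cons _ v1 _ hadj q =>
        rw [SimpleGraph.Walk.cons_isCycle_iff] at hc2
        obtain ⟨hqp, hqe⟩ := hc2
        have hv1S := hGadjS _ hadj
        have hv1ne : v1 ≠ s := (hadj.ne).symm
        have hqrp : q.reverse.IsPath := hqp.reverse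
        obtain ⟨w1, hadj2, r2, hqr⟩ : ∃ (w1 : Pt) (hadj2 : G.Adj s w1)
            (r2 : G.Walk w1 v1), q.reverse = SimpleGraph.Walk.cons hadj2 r2 := by
          cases hq2 : q.reverse with
          | nil => exact absurd rfl hv1ne
          | cons h r => exact ⟨_, h, r, rfl⟩
        rw [hqr] at hqrp
        rw [SimpleGraph.Walk.cons_isPath_iff] at hqrp
        obtain ⟨hr2p, hsr2⟩ := hqrp
        have hw1S := hGadjS _ hadj2
        have hw1v1 : w1 ≠ v1 := by
          rintro rfl
          have hnil : r2 = SimpleGraph.Walk.nil :=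
            (SimpleGraph.Walk.isPath_iff_eq_nil (p := r2)).mp hr2p
          subst hnil
          have h1 : q.reverse.edges = [s(s, w1)] := by rw [hqr]; simp
          rw [SimpleGraph.Walk.edges_reverse] at h1
          have h2 : q.edges = [s(s, w1)] := by
            have := congrArg List.reverse h1
            simpa using this
          apply hqe
          rw [h2]
          simp
        have hredge : ∀ e ∈ r2.edges, e ∈ T.edgeSet ∧ e ∉ F := by
          intro e he
          have heG : e ∈ G.edgeSet := r2.edges_subset_edgeSet he
          rw [hGdef, SimpleGraph.edgeSet_fromEdgeSet] at heG
          obtain ⟨hm, hnd⟩ := heG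
          rcases hm with hm | hm
          · exact ⟨hm.1, hm.2⟩
          · exfalso
            simp only [Set.mem_insert_iff, Set.mem_singleton_iff] at hm
            rcases hm with rfl | rfl | rfl | rfl <;>
              exact hsr2 (r2.fst_mem_support_of_mem_edges he)
        obtain ⟨e0, he0F, he0mem⟩ := hpair w1 v1 hw1S hv1S hw1v1
        have he0r2 : e0 ∈ r2.edges := by
          have := he0mem (r2.transfer T (fun e he => (hredge e he).1))
          rwa [SimpleGraph.Walk.edges_transfer] at this
        exact (hredge e0 he0r2).2 ((hFsF e0).mp he0F)
    · have hedges : ∀ e ∈ c0.edges, e ∈ T.edgeSet := by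
        intro e he
        have heG := c0.edges_subset_edgeSet he
        rw [hGdef, SimpleGraph.edgeSet_fromEdgeSet] at heG
        obtain ⟨hm, hnd⟩ := heG
        rcases hm with hm | hm
        · exact hm.1
        · exfalso
          simp only [Set.mem_insert_iff, Set.mem_singleton_iff] at hm
          rcases hm with rfl | rfl | rfl | rfl <;>
            exact hsup (c0.fst_mem_support_of_mem_edges he)
      exact hTac (c0.transfer T hedges) (hc.transfer hedges)
  · -- connectivity
    have key : ∀ z ∈ insert s (↑P : Set Pt), G.Reachable z s := by
      intro z hz
      rcases hz with rfl | hz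
      · exact SimpleGraph.Reachable.refl _
      · exact hreach z hz
    intro x hx y hy
    exact (key x hx).trans (key y hy).symm
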